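/- Let A be a continuous linear equivalence of ℋ = ℝ × H that preserves the Lorentz form. Then there exist ε ∈ {1, −1}, a surjective linear isometry Q of H, and a vector w ∈ H such that A = P ∘ T_w, where P is the bounded operator P(s,x) = (ε·s, Q x) and T_w is the boost associated with w. -/
import Mathlib


open scoped RealInnerProductSpace

noncomputable section

variable {H : Type*} [NormedAddCommGroup H] [InnerProductSpace ℝ H]

/-- The Lorentz form on `ℝ × H`: `⟨(s,x),(t,y)⟩_L = ⟪x,y⟫ - s·t`. -/
def lorentzInner (z w : ℝ × H) : ℝ := ⟪z.2, w.2⟫ - z.1 * w.1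

/-- The rank-one operator `a ⊗ b : x ↦ ⟪b,x⟫ • a`. -/
def rankOne (a b : H) : H →L[ℝ] H := (innerSL ℝ b).smulRight a

/-- The boost `T_v` associated with a vector `v`, with the convention `T_0 = id`.
For `v ≠ 0`, `T_v (s,x) = (c_v·s + ⟪v,x⟫, s•v + S_v x)` where `c_v = √(1+‖v‖²)` and
`S_v = id + ((c_v - 1)/‖v‖²)·(v ⊗ v)`. -/
def boost (v : H) : (ℝ × H) →L[ℝ] (ℝ × H) :=
  letI : Decidable (v = 0) := Classical.dec _
  if v = 0 then ContinuousLinearMap.id ℝ (ℝ × H)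
  else
    ((Real.sqrt (1 + ‖v‖ ^ 2) • ContinuousLinearMap.fst ℝ ℝ H +
        (innerSL ℝ v).comp (ContinuousLinearMap.snd ℝ ℝ H)).prod
      ((ContinuousLinearMap.fst ℝ ℝ H).smulRight v +
        (ContinuousLinearMap.id ℝ H +
            ((Real.sqrt (1 + ‖v‖ ^ 2) - 1) / ‖v‖ ^ 2) • rankOne v v).comp
          (ContinuousLinearMap.snd ℝ ℝ H)))

lemma boost_apply (v : H) (hv : v ≠ 0) (s : ℝ) (x : H) :
    boost v (s, x) =
      (Real.sqrt (1 + ‖v‖ ^ 2) * s + ⟪v, x⟫,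
       s • v + (x + (((Real.sqrt (1 + ‖v‖ ^ 2) - 1) / ‖v‖ ^ 2) * ⟪v, x⟫) • v)) := by
  simp [boost, hv, rankOne, Prod.ext_iff, smul_smul, mul_comm]

lemma boost_lorentz (v : H) (z w : ℝ × H) :
    lorentzInner (boost v z) (boost v w) = lorentzInner z w := by
  rcases eq_or_ne v 0 with rfl | hv
  · simp [boost]
  obtain ⟨s, x⟩ := z
  obtain ⟨t, y⟩ := w
  rw [boost_apply v hv, boost_apply v hv]
  have hn : ‖v‖ ^ 2 ≠ 0 := pow_ne_zero 2 (norm_ne_zero_iff.mpr hv)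
  have hc : Real.sqrt (1 + ‖v‖ ^ 2) ^ 2 = 1 + ‖v‖ ^ 2 :=
    Real.sq_sqrt (by positivity)
  simp only [lorentzInner, inner_add_left, inner_add_right, real_inner_smul_left,
    real_inner_smul_right, real_inner_self_eq_norm_sq, real_inner_comm x v,
    real_inner_comm y v]
  set c := Real.sqrt (1 + ‖v‖ ^ 2)
  field_simp
  linear_combination (⟪x, v⟫ * ⟪y, v⟫ - t * s * ‖v‖ ^ 2) * hc

lemma boost_neg_boost (v : H) (z : ℝ × H) : boost (-v) (boost v z) = z := by
  rcases eq_or_ne v 0 with rfl | hv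
  · simp [boost]
  obtain ⟨s, x⟩ := z
  have hn : ‖v‖ ^ 2 ≠ 0 := pow_ne_zero 2 (norm_ne_zero_iff.mpr hv)
  have hc : Real.sqrt (1 + ‖v‖ ^ 2) ^ 2 = 1 + ‖v‖ ^ 2 := Real.sq_sqrt (by positivity)
  rw [boost_apply v hv, boost_apply (-v) (neg_ne_zero.mpr hv)]
  simp only [norm_neg, inner_neg_left, inner_add_right, real_inner_smul_right,
    real_inner_self_eq_norm_sq, Prod.mk.injEq]
  set c := Real.sqrt (1 + ‖v‖ ^ 2)
  constructor
  · field_simp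
    linear_combination s * hc
  · match_scalars
    · field_simp
      linear_combination ⟪v, x⟫ * hc
    · field_simp

lemma boost_one_zero (v : H) : boost v (1, 0) = (Real.sqrt (1 + ‖v‖ ^ 2), v) := by
  rcases eq_or_ne v 0 with rfl | hv
  · simp [boost]
  · rw [boost_apply v hv]; simp

/-- Every continuous linear equivalence of `ℝ × H` preserving the Lorentz form factors as
`P ∘ T_w` with `P (s,x) = (ε·s, Q x)`, `ε = ±1`, `Q` a surjective linear isometry of `H`,
and `T_w` a boost. -/
theorem lorentz_eq_rotation_comp_boost [CompleteSpace H]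
    (A : (ℝ × H) ≃L[ℝ] (ℝ × H))
    (hA : ∀ z w : ℝ × H, lorentzInner (A z) (A w) = lorentzInner z w) :
    ∃ (ε : ℝ) (Q : H ≃ₗᵢ[ℝ] H) (w : H),
      (ε = 1 ∨ ε = -1) ∧
      ∀ z : ℝ × H, A z = (ε * (boost w z).1, Q ((boost w z).2)) := by
  set a := (A.symm (1, 0)).1 with ha
  set u := (A.symm (1, 0)).2 with hu
  have hnorm : a ^ 2 = 1 + ‖u‖ ^ 2 := by
    have h := hA (A.symm (1, 0)) (A.symm (1, 0))
    rw [A.apply_symm_apply] at h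
    simp only [lorentzInner, inner_zero_left, real_inner_self_eq_norm_sq, ← ha, ← hu] at h
    nlinarith [h]
  set ε : ℝ := if 0 ≤ a then 1 else -1 with hεdef
  have hε : ε = 1 ∨ ε = -1 := by
    by_cases h : 0 ≤ a <;> simp [hεdef, h]
  have hεne : ε ≠ 0 := by rcases hε with h | h <;> rw [h] <;> norm_num
  have hεa : ε * a = Real.sqrt (1 + ‖u‖ ^ 2) := by
    rw [← hnorm, Real.sqrt_sq_eq_abs]
    by_cases h : 0 ≤ a
    · simp [hεdef, h, abs_of_nonneg h]
    · simp [hεdef, h, abs_of_neg (lt_of_not_ge h)]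
  set w : H := -(ε • u) with hw
  have hnw : ‖(-w : H)‖ = ‖u‖ := by
    rcases hε with h | h <;> simp [hw, norm_smul, h]
  have hg1 : A (boost (-w) (1, 0)) = (ε, 0) := by
    have h1 : boost (-w) ((1 : ℝ), (0 : H)) = ε • A.symm (1, 0) := by
      rw [boost_one_zero, hnw]
      rw [← hεa]
      have : (-w : H) = ε • u := by rw [hw, neg_neg]
      rw [this]
      rfl
    rw [h1, map_smul, A.apply_symm_apply]
    simp [Prod.smul_mk]
  have hgl : ∀ z z' : ℝ × H,
      lorentzInner (A (boost (-w) z)) (A (boost (-w) z')) = lorentzInner z z' := by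
    intro z z'
    rw [hA, boost_lorentz]
  have hfst : ∀ x : H, (A (boost (-w) (0, x))).1 = 0 := by
    intro x
    have h := hgl (0, x) (1, 0)
    rw [hg1] at h
    simp only [lorentzInner, inner_zero_left, inner_zero_right, mul_one, zero_mul] at h
    have : (A (boost (-w) (0, x))).1 * ε = 0 := by linarith
    exact (mul_eq_zero.mp this).resolve_right hεne
  have hnrm : ∀ x : H, ‖(A (boost (-w) (0, x))).2‖ = ‖x‖ := by
    intro x
    have h := hgl (0, x) (0, x)
    simp only [lorentzInner, hfst x, mul_zero, sub_zero, zero_mul,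
      real_inner_self_eq_norm_sq] at h
    nlinarith [norm_nonneg (A (boost (-w) (0, x))).2, norm_nonneg x]
  have hdecomp : ∀ (s : ℝ) (x : H),
      A (boost (-w) (s, x)) = s • A (boost (-w) (1, 0)) + A (boost (-w) (0, x)) := by
    intro s x
    have h : ((s, x) : ℝ × H) = s • ((1 : ℝ), (0 : H)) + ((0 : ℝ), x) := by
      simp [Prod.ext_iff]
    rw [h, map_add, map_smul, map_add, map_smul]
  let L : H →ₗ[ℝ] H :=
    { toFun := fun x => (A (boost (-w) (0, x))).2
      map_add' := by
        intro x y
        have h : ((0 : ℝ), x + y) = (((0 : ℝ), x) : ℝ × H) + ((0 : ℝ), y) := by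
          simp [Prod.ext_iff]
        show (A (boost (-w) (0, x + y))).2
            = (A (boost (-w) (0, x))).2 + (A (boost (-w) (0, y))).2
        rw [h, map_add, map_add]; rfl
      map_smul' := by
        intro c x
        have h : ((0 : ℝ), c • x) = c • (((0 : ℝ), x) : ℝ × H) := by
          simp [Prod.ext_iff]
        show (A (boost (-w) (0, c • x))).2 = c • (A (boost (-w) (0, x))).2
        rw [h, map_smul, map_smul]; rfl }
  let Li : H →ₗᵢ[ℝ] H := ⟨L, fun x => hnrm x⟩
  have hsurj : Function.Surjective Li := by
    intro y
    set z := boost w (A.symm (0, y)) with hz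
    refine ⟨z.2, ?_⟩
    have hkey : A (boost (-w) z) = (0, y) := by
      rw [hz]
      have : boost (-w) (boost w (A.symm (0, y))) = A.symm (0, y) := by
        have := boost_neg_boost w (A.symm (0, y))
        exact this
      rw [this, A.apply_symm_apply]
    have hd := hdecomp z.1 z.2
    rw [Prod.mk.eta] at hd
    rw [hkey, hg1] at hd
    have h2 := congrArg Prod.snd hd
    simp only [Prod.snd_add, Prod.smul_mk, smul_zero, zero_add] at h2
    exact h2.symm
  refine ⟨ε, LinearIsometryEquiv.ofSurjective Li hsurj, w, hε, ?_⟩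
  intro z
  have hz : A z = A (boost (-w) (boost w z)) := by
    rw [boost_neg_boost w z]
  rw [hz]
  have hd := hdecomp (boost w z).1 (boost w z).2
  rw [Prod.mk.eta] at hd
  rw [hd, hg1]
  have hQ : (LinearIsometryEquiv.ofSurjective Li hsurj) ((boost w z).2)
      = (A (boost (-w) (0, (boost w z).2))).2 := rfl
  rw [hQ]
  ext
  · simp [hfst (boost w z).2, mul_comm]
  · simp
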